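/- Let α ∈ (0,1), let g : ℝ^d → ℝ^d satisfy a global Lipschitz condition with constant L > 0, let τ ≥ 0, and let f, h : ℝ₊ → ℝ^d be continuous, with x_f, x_h the unique continuous global solutions of the singular Volterra integral equations with kernel (1/Γ(α))(t−s)^{α−1} and forcing terms f and h. Define (T_τ f)(θ) = f(τ + θ) + (1/Γ(α)) ∫₀^τ (τ + θ − s)^{α−1} g(x_f(s)) ds for θ ≥ 0, and likewise T_τ h. Then for every n ∈ ℕ and every k ∈ ℕ with k ≥ τ: sup_{θ∈[0,n]} ‖(T_τ f)(θ) − (T_τ h)(θ)‖ ≤ sup_{t∈[0,k+n]} ‖f(t) − h(t)‖ + (L (k+n)^α / (α Γ(α))) · sup_{s∈[0,τ]} ‖x_f(s) − x_h(s)‖. -/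

import Mathlib

open Real MeasureTheory Set

theorem stmt9 {d : ℕ} (α : ℝ) (hα : α ∈ Set.Ioo (0:ℝ) 1)
    (g : EuclideanSpace ℝ (Fin d) → EuclideanSpace ℝ (Fin d))
    (L : ℝ) (hL : 0 < L)
    (hg : ∀ x y : EuclideanSpace ℝ (Fin d), ‖g x - g y‖ ≤ L * ‖x - y‖)
    (τ : ℝ) (hτ : 0 ≤ τ)
    (f h : ℝ → EuclideanSpace ℝ (Fin d))
    (hf : ContinuousOn f (Set.Ici 0)) (hh : ContinuousOn h (Set.Ici 0))
    (xf xh : ℝ → EuclideanSpace ℝ (Fin d))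
    (hxf : ContinuousOn xf (Set.Ici 0)) (hxh : ContinuousOn xh (Set.Ici 0))
    (hxfeq : ∀ t : ℝ, 0 ≤ t →
      xf t = f t + (1 / Real.Gamma α) •
        ∫ s in (0:ℝ)..t, ((t - s) ^ (α - 1)) • g (xf s))
    (hxheq : ∀ t : ℝ, 0 ≤ t →
      xh t = h t + (1 / Real.Gamma α) •
        ∫ s in (0:ℝ)..t, ((t - s) ^ (α - 1)) • g (xh s)) :
    ∀ (n k : ℕ), τ ≤ (k : ℝ) →
      (⨆ θ : Set.Icc (0:ℝ) (n : ℝ),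
        ‖(f (τ + θ.1) + (1 / Real.Gamma α) •
            ∫ s in (0:ℝ)..τ, ((τ + θ.1 - s) ^ (α - 1)) • g (xf s)) -
          (h (τ + θ.1) + (1 / Real.Gamma α) •
            ∫ s in (0:ℝ)..τ, ((τ + θ.1 - s) ^ (α - 1)) • g (xh s))‖) ≤
      (⨆ t : Set.Icc (0:ℝ) ((k : ℝ) + (n : ℝ)), ‖f t.1 - h t.1‖) +
        (L * ((k : ℝ) + (n : ℝ)) ^ α / (α * Real.Gamma α)) *
          (⨆ s : Set.Icc (0:ℝ) τ, ‖xf s.1 - xh s.1‖) := by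
  obtain ⟨hα0, hα1⟩ := hα
  have hΓ : 0 < Real.Gamma α := Real.Gamma_pos_of_pos hα0
  have hc : (0:ℝ) ≤ 1 / Real.Gamma α := by positivity
  have hgc : Continuous g := by
    have : LipschitzWith (Real.toNNReal L) g := by
      apply LipschitzWith.of_dist_le_mul
      intro x y
      rw [dist_eq_norm, dist_eq_norm, Real.coe_toNNReal _ hL.le]
      exact hg x y
    exact this.continuous
  -- sup of ‖xf - xh‖ on [0,τ]
  set M : ℝ := ⨆ s : Set.Icc (0:ℝ) τ, ‖xf s.1 - xh s.1‖ with hMdef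
  have bddM : BddAbove (Set.range fun s : Set.Icc (0:ℝ) τ => ‖xf s.1 - xh s.1‖) := by
    have := isCompact_Icc.bddAbove_image
      (((hxf.mono (Set.Icc_subset_Ici_self : Set.Icc (0:ℝ) τ ⊆ Set.Ici 0)).sub
        (hxh.mono (Set.Icc_subset_Ici_self))).norm)
    rwa [Set.image_eq_range] at this
  have hM0 : 0 ≤ M := by
    have := le_ciSup bddM ⟨0, by constructor <;> simp [hτ]⟩
    exact (norm_nonneg _).trans this
  have hMle : ∀ s, 0 ≤ s → s ≤ τ → ‖xf s - xh s‖ ≤ M := fun s h0 h1 =>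
    le_ciSup bddM ⟨s, h0, h1⟩
  intro n k hk
  have hn0 : (0:ℝ) ≤ (n:ℝ) := Nat.cast_nonneg n
  have bddS : BddAbove (Set.range fun t : Set.Icc (0:ℝ) ((k:ℝ) + (n:ℝ)) => ‖f t.1 - h t.1‖) := by
    have := (isCompact_Icc (a := (0:ℝ)) (b := (k:ℝ) + (n:ℝ))).bddAbove_image
      (((hf.mono (Set.Icc_subset_Ici_self)).sub (hh.mono (Set.Icc_subset_Ici_self))).norm)
    rwa [Set.image_eq_range] at this
  haveI : Nonempty (Set.Icc (0:ℝ) (n:ℝ)) := ⟨⟨0, le_refl 0, hn0⟩⟩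
  apply ciSup_le
  rintro ⟨θ, hθ0, hθn⟩
  simp only
  have hbase : ∀ s : ℝ, s ≤ τ → (0:ℝ) ≤ τ + θ - s := fun s hs => by linarith
  have hr : (-1:ℝ) < α - 1 := by linarith
  -- integrability facts
  have J1 : IntervalIntegrable (fun s => (τ + θ - s) ^ (α - 1)) volume 0 τ := by
    have := (intervalIntegral.intervalIntegrable_rpow' (r := α - 1) hr (a := τ + θ) (b := θ)).comp_sub_left (τ + θ)
    simpa using this
  have J1' : IntegrableOn (fun s => (τ + θ - s) ^ (α - 1)) (Set.Icc 0 τ) volume := by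
    rwa [intervalIntegrable_iff_integrableOn_Icc_of_le hτ] at J1
  have J2 : IntervalIntegrable (fun s => ((τ + θ - s) ^ (α - 1)) • g (xf s)) volume 0 τ := by
    rw [intervalIntegrable_iff_integrableOn_Icc_of_le hτ]
    exact J1'.smul_continuousOn
      (hgc.comp_continuousOn (hxf.mono Set.Icc_subset_Ici_self)) isCompact_Icc
  have J3 : IntervalIntegrable (fun s => ((τ + θ - s) ^ (α - 1)) • g (xh s)) volume 0 τ := by
    rw [intervalIntegrable_iff_integrableOn_Icc_of_le hτ]
    exact J1'.smul_continuousOn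
      (hgc.comp_continuousOn (hxh.mono Set.Icc_subset_Ici_self)) isCompact_Icc
  have J4 : IntervalIntegrable (fun s => (τ + θ - s) ^ (α - 1) * (L * M)) volume 0 τ :=
    J1.mul_const _
  -- rewrite difference of integrals
  have hsub : (∫ s in (0:ℝ)..τ, ((τ + θ - s) ^ (α - 1)) • g (xf s)) -
      (∫ s in (0:ℝ)..τ, ((τ + θ - s) ^ (α - 1)) • g (xh s)) =
      ∫ s in (0:ℝ)..τ, ((τ + θ - s) ^ (α - 1)) • (g (xf s) - g (xh s)) := by
    rw [← intervalIntegral.integral_sub J2 J3]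
    simp [smul_sub]
  -- bound the integral
  have hptwise : ∀ s ∈ Set.uIoc (0:ℝ) τ,
      ‖((τ + θ - s) ^ (α - 1)) • (g (xf s) - g (xh s))‖ ≤
        (τ + θ - s) ^ (α - 1) * (L * M) := by
    intro s hs
    rw [Set.uIoc_of_le hτ] at hs
    rw [norm_smul, Real.norm_eq_abs, abs_of_nonneg (Real.rpow_nonneg (hbase s hs.2) _)]
    apply mul_le_mul_of_nonneg_left _ (Real.rpow_nonneg (hbase s hs.2) _)
    exact (hg _ _).trans (mul_le_mul_of_nonneg_left (hMle s hs.1.le hs.2) hL.le)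
  have hInorm : ‖∫ s in (0:ℝ)..τ, ((τ + θ - s) ^ (α - 1)) • (g (xf s) - g (xh s))‖ ≤
      |∫ s in (0:ℝ)..τ, (τ + θ - s) ^ (α - 1) * (L * M)| :=
    intervalIntegral.norm_integral_le_abs_of_norm_le
      (MeasureTheory.ae_restrict_of_forall_mem measurableSet_uIoc hptwise) J4
  -- compute the scalar integral
  have hIval : (∫ s in (0:ℝ)..τ, (τ + θ - s) ^ (α - 1)) =
      ((τ + θ) ^ α - θ ^ α) / α := by
    rw [intervalIntegral.integral_comp_sub_left (fun u => u ^ (α - 1)) (τ + θ)]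
    rw [integral_rpow (Or.inl hr)]
    norm_num
  have hIle : (∫ s in (0:ℝ)..τ, (τ + θ - s) ^ (α - 1)) ≤ ((k:ℝ) + (n:ℝ)) ^ α / α := by
    rw [hIval]
    have h1 : (τ + θ) ^ α ≤ ((k:ℝ) + (n:ℝ)) ^ α :=
      Real.rpow_le_rpow (by linarith) (by linarith) hα0.le
    have h2 : (0:ℝ) ≤ θ ^ α := Real.rpow_nonneg hθ0 _
    rw [div_le_div_iff_of_pos_right hα0]
    linarith
  have hInonneg : (0:ℝ) ≤ ∫ s in (0:ℝ)..τ, (τ + θ - s) ^ (α - 1) := by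
    apply intervalIntegral.integral_nonneg hτ
    intro s hs
    exact Real.rpow_nonneg (hbase s hs.2) _
  have hscal : (∫ s in (0:ℝ)..τ, (τ + θ - s) ^ (α - 1) * (L * M)) =
      (∫ s in (0:ℝ)..τ, (τ + θ - s) ^ (α - 1)) * (L * M) :=
    intervalIntegral.integral_mul_const _ _
  -- bound on ‖f - h‖ term
  have hS1 : ‖f (τ + θ) - h (τ + θ)‖ ≤
      ⨆ t : Set.Icc (0:ℝ) ((k:ℝ) + (n:ℝ)), ‖f t.1 - h t.1‖ :=
    le_ciSup bddS ⟨τ + θ, by constructor <;> [linarith; linarith]⟩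
  -- assemble
  set I : ℝ := ∫ s in (0:ℝ)..τ, (τ + θ - s) ^ (α - 1) with hIdef
  calc ‖(f (τ + θ) + (1 / Real.Gamma α) •
            ∫ s in (0:ℝ)..τ, ((τ + θ - s) ^ (α - 1)) • g (xf s)) -
          (h (τ + θ) + (1 / Real.Gamma α) •
            ∫ s in (0:ℝ)..τ, ((τ + θ - s) ^ (α - 1)) • g (xh s))‖
      = ‖(f (τ + θ) - h (τ + θ)) + (1 / Real.Gamma α) •
          ((∫ s in (0:ℝ)..τ, ((τ + θ - s) ^ (α - 1)) • g (xf s)) -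
           (∫ s in (0:ℝ)..τ, ((τ + θ - s) ^ (α - 1)) • g (xh s)))‖ := by
        rw [smul_sub]; congr 1; abel
    _ ≤ ‖f (τ + θ) - h (τ + θ)‖ + ‖(1 / Real.Gamma α) •
          ((∫ s in (0:ℝ)..τ, ((τ + θ - s) ^ (α - 1)) • g (xf s)) -
           (∫ s in (0:ℝ)..τ, ((τ + θ - s) ^ (α - 1)) • g (xh s)))‖ := norm_add_le _ _
    _ ≤ ‖f (τ + θ) - h (τ + θ)‖ + (1 / Real.Gamma α) * (I * (L * M)) := by
        gcongr _ + ?_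
        rw [norm_smul, Real.norm_eq_abs, abs_of_nonneg hc, hsub]
        apply mul_le_mul_of_nonneg_left _ hc
        calc ‖∫ s in (0:ℝ)..τ, ((τ + θ - s) ^ (α - 1)) • (g (xf s) - g (xh s))‖
            ≤ |∫ s in (0:ℝ)..τ, (τ + θ - s) ^ (α - 1) * (L * M)| := hInorm
          _ = I * (L * M) := by
              rw [hscal, abs_of_nonneg (by positivity)]
    _ ≤ (⨆ t : Set.Icc (0:ℝ) ((k:ℝ) + (n:ℝ)), ‖f t.1 - h t.1‖) +
        (L * ((k:ℝ) + (n:ℝ)) ^ α / (α * Real.Gamma α)) * M := by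
        refine add_le_add hS1 ?_
        have hkn : (0:ℝ) ≤ ((k:ℝ) + (n:ℝ)) ^ α := Real.rpow_nonneg (by positivity) _
        have : (1 / Real.Gamma α) * (I * (L * M)) = (I * L / Real.Gamma α) * M := by
          field_simp
        rw [this]
        apply mul_le_mul_of_nonneg_right _ hM0
        rw [div_le_div_iff₀ hΓ (by positivity)]
        have : I * L * (α * Real.Gamma α) = (I * α) * (L * Real.Gamma α) := by ring
        rw [this]
        have h2 : I * α ≤ ((k:ℝ) + (n:ℝ)) ^ α := by
          have := mul_le_mul_of_nonneg_right hIle hα0.le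
          rwa [div_mul_cancel₀ _ hα0.ne'] at this
        calc (I * α) * (L * Real.Gamma α) ≤ ((k:ℝ) + (n:ℝ)) ^ α * (L * Real.Gamma α) :=
              mul_le_mul_of_nonneg_right h2 (by positivity)
          _ = L * ((k:ℝ) + (n:ℝ)) ^ α * Real.Gamma α := by ring
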